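/- arXiv:1710.10105 — 7 statements merged into one kernel-verified Lean document; each statement's English description precedes it below -/
import Mathlib

section
/- Let T be a string of length n over an ordered alphabet whose last symbol is a sentinel strictly smaller than all other symbols and occurring nowhere else. For i < n, let j be the smallest position with i < j ≤ n such that the suffix T[j..n] is lexicographically smaller than T[i..n]. Then the substring T[i..j-1] is a Lyndon word. -/
/-- A nonempty string is a Lyndon word if it is lexicographically strictly smaller
than all of its proper rotations: for every factorization `w = u ++ v` with `u, v`
nonempty, `w < v ++ u`. -/
def IsLyndon {α : Type*} [LinearOrder α] (w : List α) : Prop :=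
  w ≠ [] ∧ ∀ u v : List α, w = u ++ v → u ≠ [] → v ≠ [] → w < v ++ u


open List in
lemma lex_append_left_iff {α : Type*} [LinearOrder α] (a x y : List α) :
    a ++ x < a ++ y ↔ x < y := by
  constructor
  · intro h
    induction a with
    | nil => exact h
    | cons c a ih => exact ih ((List.lex_cons_iff).1 h)
  · intro h
    exact List.Lex.append_left _ h a

open List in
lemma lex_key {α : Type*} [LinearOrder α] :
    ∀ (x y s : List α), x ++ s < y ++ s → ¬ y <+: x → ∀ t, x < y ++ t
  | x, [], _, _, hp, _ => absurd (List.nil_prefix) hp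
  | [], b :: y, _, _, _, t => List.nil_lt_cons b (y ++ t)
  | a :: x, b :: y, s, h, hp, t => by
    rcases lt_trichotomy a b with hab | hab | hab
    · exact List.Lex.rel hab
    · subst hab
      have h' : x ++ s < y ++ s := (List.lex_cons_iff).1 h
      have hp' : ¬ y <+: x := fun hyx => hp (List.cons_prefix_cons.2 ⟨rfl, hyx⟩)
      exact List.Lex.cons (lex_key x y s h' hp' t)
    · exfalso
      cases h with
      | cons h => exact lt_irrefl a hab
      | rel h => exact lt_asymm hab h

/-- If `j` is the smallest position after `i` whose suffix is lexicographically
smaller than the suffix at `i`, then `T[i..j-1]` is a Lyndon word.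
(0-indexed; the sentinel is `T[n-1]`, strictly smaller than every other symbol.) -/
theorem lyndon_of_next_smaller_suffix {α : Type*} [LinearOrder α] [Inhabited α]
    (T : List α) (n i j : ℕ) (hn : T.length = n)
    (hsent : ∀ k, k + 1 < n → T[n - 1]! < T[k]!)
    (hij : i < j) (hjn : j < n)
    (hj : T.drop j < T.drop i)
    (hmin : ∀ k, i < k → k < j → ¬ T.drop k < T.drop i) :
    IsLyndon ((T.drop i).take (j - i)) := by
  set w := (T.drop i).take (j - i) with hwdef
  have hwlen : w.length = j - i := by
    simp [hwdef, List.length_take, List.length_drop, hn]; omega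
  have hdecomp : T.drop i = w ++ T.drop j := by
    have h1 : T.drop j = (T.drop i).drop (j - i) := by
      rw [List.drop_drop]; try (congr 1; omega)
    rw [h1, hwdef, List.take_append_drop]
  constructor
  · intro h; rw [h] at hwlen; simp at hwlen; omega
  · intro u v huv hu hv
    have hulen : 0 < u.length := List.length_pos_iff.2 hu
    have hvlen : 0 < v.length := List.length_pos_iff.2 hv
    have hsum : u.length + v.length = j - i := by
      rw [← hwlen, huv, List.length_append]
    set k := i + u.length with hkdef
    have hik : i < k := by omega
    have hkj : k < j := by omega
    have hSk : T.drop k = v ++ T.drop j := by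
      have h2 : T.drop k = (T.drop i).drop u.length := by
        rw [List.drop_drop]; try (congr 1; omega)
      rw [h2, hdecomp, huv, List.append_assoc, List.drop_left]
    have hlt : T.drop i < T.drop k := by
      have hle : T.drop i ≤ T.drop k := not_lt.1 (hmin k hik hkj)
      have hne : T.drop i ≠ T.drop k := by
        intro h
        have h3 := congrArg List.length h
        simp only [List.length_drop, hn] at h3
        omega
      exact lt_of_le_of_ne hle hne
    have huv' : (u ++ v) ++ T.drop j < v ++ T.drop j := by
      rw [← hSk, ← huv, ← hdecomp]; exact hlt
    by_cases hpre : v <+: (u ++ v)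
    · exfalso
      obtain ⟨w', hw'⟩ := hpre
      have hw'len : w'.length = u.length := by
        have h4 := congrArg List.length hw'
        simp only [List.length_append] at h4
        omega
      set m := i + v.length with hmdef
      have him : i < m := by omega
      have hjm : m < j := by omega
      have hSm : T.drop m = w' ++ T.drop j := by
        have h5 : T.drop m = (T.drop i).drop v.length := by
          rw [List.drop_drop]; try (congr 1; omega)
        rw [h5, hdecomp, huv, ← hw', List.append_assoc, List.drop_left]
      have h1 : w' ++ T.drop j < T.drop j := by
        have h6 := huv'
        rw [← hw', List.append_assoc] at h6
        exact (lex_append_left_iff v (w' ++ T.drop j) (T.drop j)).1 h6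
      have h3 : T.drop m < T.drop i := lt_trans (hSm ▸ h1) hj
      exact hmin m him hjm h3
    · rw [huv]
      exact lex_key (u ++ v) v (T.drop j) huv' hpre u
end

section
/- Let T be a string of length n with a unique minimal sentinel at position n. For i < n, let j be the smallest position with i < j ≤ n such that T[j..n] ≺ T[i..n] lexicographically. Then T[i..j] is not a Lyndon word; consequently T[i..j-1] is the longest Lyndon word starting at position i, i.e., the Lyndon array satisfies λ[i] = j - i. -/
theorem cons_lt_cons_iff' {α : Type*} [LinearOrder α] (x y : α) (l m : List α) :
    (x :: l) < (y :: m) ↔ x < y ∨ (x = y ∧ l < m) := by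
  constructor
  · intro h
    cases h with
    | rel h => exact Or.inl h
    | cons h => exact Or.inr ⟨rfl, h⟩
  · rintro (h | ⟨rfl, h⟩)
    · exact List.Lex.rel h
    · exact List.Lex.cons h

theorem append_lt_append_iff' {α : Type*} [LinearOrder α] :
    ∀ (a b s t : List α), a.length = b.length →
      (a ++ s < b ++ t ↔ a < b ∨ (a = b ∧ s < t))
  | [], [], s, t, _ => by
    constructor
    · intro h; exact Or.inr ⟨rfl, h⟩
    · rintro (h | ⟨-, h⟩)
      · cases h
      · exact h
  | [], _ :: _, s, t, h => by simp at h
  | _ :: _, [], s, t, h => by simp at h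
  | x :: a, y :: b, s, t, h => by
    simp only [List.length_cons, Nat.add_right_cancel_iff] at h
    simp only [List.cons_append, cons_lt_cons_iff', append_lt_append_iff' a b s t h,
      List.cons.injEq]
    tauto

theorem drop_decomp' {α : Type*} (T : List α) (k m : ℕ) :
    T.drop k = (T.drop k).take m ++ T.drop (k + m) := by
  conv_lhs => rw [← List.take_append_drop m (T.drop k)]
  rw [List.drop_drop]

/-- With `j` the smallest position after `i` whose suffix is smaller than the
suffix at `i`: `T[i..j]` is not a Lyndon word, `T[i..j-1]` is a Lyndon word,
and it is the longest Lyndon word starting at `i`; i.e. the Lyndon array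
satisfies `λ[i] = j - i`. (0-indexed.) -/
theorem lyndonArray_eq_next_smaller {α : Type*} [LinearOrder α] [Inhabited α]
    (T : List α) (n i j : ℕ) (hn : T.length = n)
    (hsent : ∀ k, k + 1 < n → T[n - 1]! < T[k]!)
    (hij : i < j) (hjn : j < n)
    (hj : T.drop j < T.drop i)
    (hmin : ∀ k, i < k → k < j → ¬ T.drop k < T.drop i) :
    ¬ IsLyndon ((T.drop i).take (j - i + 1)) ∧
    IsLyndon ((T.drop i).take (j - i)) ∧
    (∀ m ≤ n - i, IsLyndon ((T.drop i).take m) → m ≤ j - i) := by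
  have hlen : ∀ k, (T.drop k).length = n - k := fun k => by rw [List.length_drop, hn]
  have key : ∀ m ≤ n - i, IsLyndon ((T.drop i).take m) → m ≤ j - i := by
    intro m hm hL
    by_contra hmd
    push_neg at hmd
    set d := j - i with hd
    set e := m - d with he
    set x := (T.drop i).take m with hx
    have hde : 1 ≤ d := by omega
    have he1 : 1 ≤ e := by omega
    have hxlen : x.length = m := by
      rw [hx, List.length_take, hlen]; exact Nat.min_eq_left (by omega)
    have hw : x.take d = (T.drop i).take d := by
      rw [hx, List.take_take, Nat.min_eq_left (by omega)]
    have hwlen : (x.take d).length = d := by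
      rw [hw, List.length_take, hlen]; exact Nat.min_eq_left (by omega)
    have hv : x.drop d = (T.drop j).take e := by
      rw [hx, List.drop_take, List.drop_drop, he, show i + d = j from by omega]
    have hvlen : (x.drop d).length = e := by
      rw [hv, List.length_take, hlen]; exact Nat.min_eq_left (by omega)
    have hxwv : x = x.take d ++ x.drop d := (List.take_append_drop d x).symm
    have h1 : x < x.drop d ++ x.take d :=
      hL.2 (x.take d) (x.drop d) hxwv
        (by intro h; rw [h] at hwlen; simp at hwlen; omega)
        (by intro h; rw [h] at hvlen; simp at hvlen; omega)
    have hxe : x = x.take e ++ x.drop e := (List.take_append_drop e x).symm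
    have hxelen : (x.take e).length = e := by
      rw [List.length_take, hxlen]; exact Nat.min_eq_left (by omega)
    have hxdlen : (x.drop e).length = d := by rw [List.length_drop, hxlen]; omega
    conv at h1 => lhs; rw [hxe]
    rcases (append_lt_append_iff' (x.take e) (x.drop d) (x.drop e) (x.take d)
        (by rw [hxelen, hvlen])).mp h1 with hA | ⟨hB, hC⟩
    · have hxte : x.take e = (T.drop i).take e := by
        rw [hx, List.take_take, Nat.min_eq_left (by omega)]
      have hSi : T.drop i = (T.drop i).take e ++ T.drop (i + e) := drop_decomp' T i e
      have hSj : T.drop j = (T.drop j).take e ++ T.drop (j + e) := drop_decomp' T j e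
      have hcon : T.drop i < T.drop j := by
        rw [hSi, hSj]
        refine (append_lt_append_iff' _ _ _ _ ?_).mpr (Or.inl ?_)
        · rw [List.length_take, List.length_take, hlen, hlen]
          rw [Nat.min_eq_left (by omega), Nat.min_eq_left (by omega)]
        · rw [← hxte, ← hv]; exact hA
      exact absurd hj (lt_asymm hcon)
    · have h3 : x < x.drop e ++ x.take e :=
        hL.2 (x.take e) (x.drop e) hxe
          (by intro h; rw [h] at hxelen; simp at hxelen; omega)
          (by intro h; rw [h] at hxdlen; simp at hxdlen; omega)
      rw [hB] at h3
      conv at h3 => lhs; rw [hxwv]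
      rcases (append_lt_append_iff' (x.take d) (x.drop e) (x.drop d) (x.drop d)
          (by rw [hwlen, hxdlen])).mp h3 with h4 | ⟨-, h4⟩
      · exact absurd h4 (lt_asymm hC)
      · exact lt_irrefl _ h4
  refine ⟨fun hL => absurd (key (j - i + 1) (by omega) hL) (by omega), ⟨?_, ?_⟩, key⟩
  · have hwl : ((T.drop i).take (j - i)).length = j - i := by
      rw [List.length_take, hlen]; exact Nat.min_eq_left (by omega)
    intro h; rw [h] at hwl; simp at hwl; omega
  · intro u v huv hu hv
    have hwlen : ((T.drop i).take (j - i)).length = j - i := by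
      rw [List.length_take, hlen]; exact Nat.min_eq_left (by omega)
    have hsum : u.length + v.length = j - i := by
      rw [← List.length_append, ← huv, hwlen]
    have hu1 : 0 < u.length := List.length_pos_iff.mpr hu
    have hv1 : 0 < v.length := List.length_pos_iff.mpr hv
    set f := j - i - u.length with hf
    have hf1 : 1 ≤ f := by omega
    have hueq : u = (T.drop i).take u.length := by
      have h := congrArg (List.take u.length) huv
      rw [List.take_take, Nat.min_eq_left (by omega), List.take_left] at h
      exact h.symm
    have hveq : v = (T.drop (i + u.length)).take f := by
      have h := congrArg (List.drop u.length) huv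
      rw [List.drop_take, List.drop_drop, List.drop_left] at h
      rw [← h, hf]
    have hSiSk : T.drop i < T.drop (i + u.length) := by
      refine lt_of_le_of_ne (not_lt.mp (hmin (i + u.length) (by omega) (by omega))) ?_
      intro h
      have := congrArg List.length h
      rw [hlen, hlen] at this
      omega
    have hSi : T.drop i = (T.drop i).take f ++ T.drop (i + f) := drop_decomp' T i f
    have hSk : T.drop (i + u.length) = v ++ T.drop j := by
      conv_lhs => rw [drop_decomp' T (i + u.length) f]
      rw [← hveq, show i + u.length + f = j from by omega]
    have hflen : ((T.drop i).take f).length = f := by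
      rw [List.length_take, hlen]; exact Nat.min_eq_left (by omega)
    have hvlen : v.length = f := by omega
    rw [hSi, hSk] at hSiSk
    rcases (append_lt_append_iff' _ _ _ _ (by rw [hflen, hvlen])).mp hSiSk
      with hA | ⟨hB, hC⟩
    · have hwdec : (T.drop i).take (j - i) =
          (T.drop i).take f ++ ((T.drop i).take (j - i)).drop f := by
        conv_lhs => rw [← List.take_append_drop f ((T.drop i).take (j - i))]
        rw [List.take_take, Nat.min_eq_left (by omega)]
      rw [hwdec]
      exact (append_lt_append_iff' _ _ _ _ (by rw [hflen, hvlen])).mpr (Or.inl hA)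
    · exact absurd (hC.trans hj) (hmin (i + f) (by omega) (by omega))
end

section
/- Let T be a string of length n with unique minimal sentinel at position n, and let λ be its Lyndon array. Then the intervals [i, i + λ[i] - 1] for 1 ≤ i ≤ n form a laminar family: for any i < j, either the intervals are disjoint (i + λ[i] - 1 < j) or the interval starting at j is contained in the one starting at i (j + λ[j] - 1 ≤ i + λ[i] - 1). Equivalently, the longest Lyndon words starting at distinct positions never properly overlap. -/
/-- `lam` is the Lyndon array of `T` (0-indexed): `lam i` is the length of the
longest Lyndon word starting at position `i` of `T`. -/
def IsLyndonArray {α : Type*} [LinearOrder α] (T : List α) (lam : ℕ → ℕ) : Prop :=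
  ∀ i < T.length,
    IsLyndon ((T.drop i).take (lam i)) ∧
    ∀ m ≤ T.length - i, IsLyndon ((T.drop i).take m) → m ≤ lam i

section Helpers

variable {α : Type*} [LinearOrder α]

private lemma list_lt_iff_lex {x y : List α} : x < y ↔ List.Lex (· < ·) x y := Iff.rfl

private lemma lex_decomp {x y : List α} (h : x < y) :
    x <+: y ∨ ∃ p a b x' y', a < b ∧ x = p ++ a :: x' ∧ y = p ++ b :: y' := by
  rw [list_lt_iff_lex] at h
  induction h with
  | nil => exact Or.inl (List.nil_prefix)
  | @cons a l₁ l₂ h ih =>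
      rcases ih with ⟨t, ht⟩ | ⟨p, c, d, x', y', hcd, hx, hy⟩
      · exact Or.inl ⟨t, by simp [ht]⟩
      · exact Or.inr ⟨a :: p, c, d, x', y', hcd, by simp [hx], by simp [hy]⟩
  | @rel a l₁ b l₂ h => exact Or.inr ⟨[], a, b, l₁, l₂, h, rfl, rfl⟩

private lemma lex_mismatch {p x' y' : List α} {a b : α} (h : a < b) :
    (p ++ a :: x') < (p ++ b :: y') :=
  list_lt_iff_lex.mpr (List.Lex.append_left _ (List.Lex.rel h) p)

private lemma lex_cancel_left : ∀ (s : List α) {x y : List α}, s ++ x < s ++ y → x < y := by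
  intro s
  induction s with
  | nil => intro x y h; exact h
  | cons a s ih =>
      intro x y h
      rw [list_lt_iff_lex] at h
      simp only [List.cons_append] at h
      rw [List.lex_cons_iff] at h
      exact ih h

private lemma lex_eqlen : ∀ (x y : List α) {s t : List α}, x.length = y.length →
    x ++ s < y ++ t → x < y ∨ (x = y ∧ s < t) := by
  intro x
  induction x with
  | nil =>
      intro y s t hl h
      have hy : y = [] := by
        cases y with
        | nil => rfl
        | cons b y => simp at hl
      subst hy
      exact Or.inr ⟨rfl, h⟩
  | cons a x ih =>
      intro y s t hl h
      cases y with
      | nil => simp at hl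
      | cons b y =>
          rw [list_lt_iff_lex] at h
          simp only [List.cons_append] at h
          cases h with
          | cons h' =>
              rcases ih y (by simpa using hl) h' with h'' | ⟨rfl, h''⟩
              · exact Or.inl (list_lt_iff_lex.mpr (List.Lex.cons h''))
              · exact Or.inr ⟨rfl, h''⟩
          | rel h' => exact Or.inl (list_lt_iff_lex.mpr (List.Lex.rel h'))

private lemma lyndon_unbordered {w x y s : List α} (hw : IsLyndon w)
    (hx : w = x ++ s) (hy : w = s ++ y) (hs : s ≠ []) (hxne : x ≠ []) : False := by
  have hlx := congrArg List.length hx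
  have hly := congrArg List.length hy
  simp only [List.length_append] at hlx hly
  have hlen : x.length = y.length := by omega
  have hyne : y ≠ [] := by
    intro h
    subst h
    apply hxne
    simp at hlen
    exact hlen
  have h1 : w < s ++ x := hw.2 x s hx hxne hs
  have h2 : w < y ++ s := hw.2 s y hy hs hyne
  rw [hy] at h1
  have hyx : y < x := lex_cancel_left s h1
  rw [hx] at h2
  rcases lex_eqlen x y hlen h2 with h3 | ⟨h3, h4⟩
  · exact absurd hyx (lt_asymm h3)
  · subst h3; exact lt_irrefl _ hyx

private lemma lyndon_lt_suffix {w u s : List α} (hw : IsLyndon w)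
    (h : w = u ++ s) (hu : u ≠ []) (hs : s ≠ []) : w < s := by
  rcases lt_trichotomy w s with hlt | heq | hgt
  · exact hlt
  · exfalso
    have := congrArg List.length h
    rw [heq] at this
    simp only [List.length_append] at this
    apply hu
    apply List.length_eq_zero_iff.mp
    omega
  · exfalso
    rcases lex_decomp hgt with ⟨y, hy⟩ | ⟨p, a, b, s₁, w₁, hab, hse, hwe⟩
    · exact lyndon_unbordered hw h hy.symm hs hu
    · have h1 : w < s ++ u := hw.2 u s h hu hs
      rw [hwe, hse] at h1
      have h1' : p ++ b :: w₁ < p ++ (a :: (s₁ ++ u)) := by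
        simpa [List.append_assoc] using h1
      have h2 := lex_cancel_left p h1'
      rw [list_lt_iff_lex] at h2
      cases h2 with
      | cons h3 => exact lt_irrefl _ hab
      | rel h3 => exact absurd h3 (lt_asymm hab)

private lemma lyndon_of_suffixes {w : List α} (hne : w ≠ [])
    (H : ∀ u s : List α, w = u ++ s → u ≠ [] → s ≠ [] → w < s) : IsLyndon w := by
  refine ⟨hne, fun u v huv hu hv => ?_⟩
  have h := H u v huv hu hv
  rcases lex_decomp h with hp | ⟨p, a, b, x', y', hab, hw, hv'⟩
  · exfalso
    have h1 := hp.length_le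
    have h2 := congrArg List.length huv
    simp only [List.length_append] at h2
    apply hu
    apply List.length_eq_zero_iff.mp
    omega
  · rw [hw, hv']
    have : (p ++ b :: y') ++ u = p ++ b :: (y' ++ u) := by simp
    rw [this]
    exact lex_mismatch hab

private lemma merge_lt {a b c : List α} (ha : a ≠ []) (hb : b ≠ [])
    (hu : IsLyndon (a ++ b)) : a ++ (b ++ c) < b ++ c := by
  have h1 : (a ++ b) < b ++ a := hu.2 a b rfl ha hb
  rcases lex_decomp h1 with hp | ⟨p, x, y, r, r', hxy, he1, he2⟩
  · exfalso
    have heq : a ++ b = b ++ a := hp.eq_of_length (by simp [Nat.add_comm])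
    exact lyndon_unbordered hu rfl heq hb ha
  · by_cases hpb : p.length + 1 ≤ b.length
    · have h2 : (p ++ [y]) <+: b ++ a := ⟨r', by simp [he2]⟩
      have hpy : (p ++ [y]) <+: b :=
        List.prefix_of_prefix_length_le h2 (List.prefix_append b a) (by simp; omega)
      obtain ⟨b₁, hb₁⟩ := hpy
      have hbeq : b = p ++ y :: b₁ := by rw [← hb₁]; simp
      have hw1 : a ++ (b ++ c) = p ++ x :: (r ++ c) := by
        rw [← List.append_assoc, he1]; simp
      have hw2 : b ++ c = p ++ y :: (b₁ ++ c) := by rw [hbeq]; simp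
      rw [hw1, hw2]
      exact lex_mismatch hxy
    · exfalso
      have hpw : p <+: a ++ b := ⟨x :: r, he1.symm⟩
      have hbp : b <+: p :=
        List.prefix_of_prefix_length_le (List.prefix_append b a) ⟨y :: r', he2.symm⟩ (by omega)
      obtain ⟨y₂, hy₂⟩ := hbp.trans hpw
      exact lyndon_unbordered hu rfl hy₂.symm hb ha

private lemma lyndon_merge {a b c : List α} (ha : a ≠ []) (hb : b ≠ []) (hc : c ≠ [])
    (hu : IsLyndon (a ++ b)) (hv : IsLyndon (b ++ c)) : IsLyndon (a ++ (b ++ c)) := by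
  apply lyndon_of_suffixes (by simp [ha])
  intro u s hsplit hune hsne
  rcases List.append_eq_append_iff.mp hsplit.symm with ⟨t, hat, hst⟩ | ⟨t, hut, hts⟩
  · by_cases ht : t = []
    · subst ht
      rw [hst]
      simp only [List.nil_append]
      exact merge_lt ha hb hu
    · have h1 : a ++ b < t ++ b :=
        lyndon_lt_suffix hu (by rw [hat]; simp) hune (by simp [ht])
      rcases lex_decomp h1 with hp | ⟨p, x, y, r, r', hxy, he1, he2⟩
      · exfalso
        have hl1 := hp.length_le
        have hl2 := congrArg List.length hat
        simp only [List.length_append] at hl1 hl2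
        have : u.length = 0 := by omega
        exact hune (List.length_eq_zero_iff.mp this)
      · have hw1 : a ++ (b ++ c) = p ++ x :: (r ++ c) := by
          rw [← List.append_assoc, he1]; simp
        have hw2 : s = p ++ y :: (r' ++ c) := by
          rw [hst, ← List.append_assoc, he2]; simp
        rw [hw1, hw2]
        exact lex_mismatch hxy
  · have hwv : a ++ (b ++ c) < b ++ c := merge_lt ha hb hu
    by_cases ht : t = []
    · subst ht
      simp only [List.nil_append] at hts
      rw [← hts]
      exact hwv
    · have hvs : b ++ c < s := lyndon_lt_suffix hv hts ht hsne
      exact lt_trans hwv hvs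

private lemma not_lyndon_drop [Inhabited α] {T : List α} {n k : ℕ}
    (hn : T.length = n) (hk : k + 1 < n)
    (hsent : ∀ m, m + 1 < n → T[n - 1]! < T[m]!) : ¬ IsLyndon (T.drop k) := by
  intro hL
  have hkT : k < T.length := by omega
  have hne : T.drop k ≠ [] := by
    rw [Ne, List.drop_eq_nil_iff]
    omega
  have hDlen : (T.drop k).length = n - k := by simp [hn]
  have hdlne : (T.drop k).dropLast ≠ [] := by
    intro h
    have := congrArg List.length h
    simp [hDlen] at this
    omega
  have hlast : (T.drop k).getLast hne = T[n - 1]'(by omega) := by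
    rw [List.getLast_eq_getElem, List.getElem_drop]
    congr 1
    omega
  have h1 : T.drop k < [(T.drop k).getLast hne] ++ (T.drop k).dropLast :=
    hL.2 _ _ (List.dropLast_append_getLast hne).symm hdlne (by simp)
  rw [hlast, List.drop_eq_getElem_cons hkT] at h1
  simp only [List.singleton_append] at h1
  have hs := hsent k hk
  rw [getElem!_pos T k hkT, getElem!_pos T (n - 1) (by omega)] at hs
  exact absurd h1 (lt_asymm (list_lt_iff_lex.mpr (List.Lex.rel hs)))

end Helpers

/-- Longest Lyndon words starting at distinct positions never properly overlap:
the intervals `[i, i + λ[i] - 1]` form a laminar family. For `i < j` either the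
intervals are disjoint (`i + λ[i] ≤ j`) or the one starting at `j` is contained
in the one starting at `i` (`j + λ[j] ≤ i + λ[i]`). (0-indexed.) -/
theorem lyndonArray_laminar {α : Type*} [LinearOrder α] [Inhabited α]
    (T : List α) (n : ℕ) (hn : T.length = n) (hpos : 0 < n)
    (hsent : ∀ k, k + 1 < n → T[n - 1]! < T[k]!)
    (lam : ℕ → ℕ) (hlam : IsLyndonArray T lam) :
    ∀ i j : ℕ, i < j → j < n → i + lam i ≤ j ∨ j + lam j ≤ i + lam i := by
  have bound : ∀ k, k + 1 < n → k + lam k < n := by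
    intro k hk
    by_contra hb
    push_neg at hb
    have hlt : (T.drop k).length ≤ lam k := by
      simp [hn]
      omega
    have hL := (hlam k (by omega)).1
    rw [List.take_of_length_le hlt] at hL
    exact not_lyndon_drop hn hk hsent hL
  intro i j hij hjn
  by_cases hjn' : j + 1 < n
  · by_contra hcon
    push_neg at hcon
    obtain ⟨h1, h2⟩ := hcon
    have hbi : i + lam i < n := bound i (by omega)
    have hbj : j + lam j < n := bound j hjn'
    have hTi : i < T.length := by omega
    have hTj : j < T.length := by omega
    set d1 := j - i with hd1
    set d2 := i + lam i - j with hd2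
    set d3 := j + lam j - (i + lam i) with hd3
    set a := (T.drop i).take d1 with hadef
    set b := (T.drop j).take d2 with hbdef
    set c := (T.drop (i + lam i)).take d3 with hcdef
    have hu : (T.drop i).take (lam i) = a ++ b := by
      have h : lam i = d1 + d2 := by omega
      rw [h, List.take_add, List.drop_drop]
      have h' : i + d1 = j := by omega
      rw [h']
    have hv : (T.drop j).take (lam j) = b ++ c := by
      have h : lam j = d2 + d3 := by omega
      rw [h, List.take_add, List.drop_drop]
      have h' : j + d2 = i + lam i := by omega
      rw [h']
    have hw : (T.drop i).take (d1 + lam j) = a ++ (b ++ c) := by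
      rw [List.take_add, List.drop_drop]
      have h' : i + d1 = j := by omega
      rw [h', hv]
    have ha : a ≠ [] := by
      rw [hadef, Ne, List.take_eq_nil_iff, List.drop_eq_nil_iff]
      push_neg
      omega
    have hb' : b ≠ [] := by
      rw [hbdef, Ne, List.take_eq_nil_iff, List.drop_eq_nil_iff]
      push_neg
      omega
    have hc : c ≠ [] := by
      rw [hcdef, Ne, List.take_eq_nil_iff, List.drop_eq_nil_iff]
      push_neg
      omega
    have hLu : IsLyndon (a ++ b) := by rw [← hu]; exact (hlam i hTi).1
    have hLv : IsLyndon (b ++ c) := by rw [← hv]; exact (hlam j hTj).1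
    have hmerge : IsLyndon ((T.drop i).take (d1 + lam j)) := by
      rw [hw]
      exact lyndon_merge ha hb' hc hLu hLv
    have hmax := (hlam i hTi).2 (d1 + lam j) (by omega) hmerge
    omega
  · left
    have hbi : i + lam i < n := bound i (by omega)
    omega
end

section
/- Let T be a string of length n with unique minimal sentinel at position n, λ its Lyndon array, and ISA its inverse suffix array. Then for all i < n: λ[i] = 1 if and only if ISA[i+1] < ISA[i], i.e., position i ends a maximal Lyndon word of length 1 exactly when the suffix at position i+1 is lexicographically smaller than the suffix at position i. -/
section Aux

variable {α : Type*} [LinearOrder α]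

/-- If two lists are mutually non-prefixes and lex-comparable with some appended
tails, they compare the same way with any appended tails. -/
private lemma lex_stable : ∀ (x y : List α), ¬ y <+: x → ¬ x <+: y →
    ∀ z z', List.Lex (· < ·) (x ++ z) (y ++ z') →
    ∀ s s', List.Lex (· < ·) (x ++ s) (y ++ s')
  | [], _, _, hx, _, _, _, _, _ => absurd (List.nil_prefix) hx
  | _ :: _, [], hy, _, _, _, _, _, _ => absurd (List.nil_prefix) hy
  | a :: x, b :: y, hy, hx, z, z', h, s, s' => by
    cases h with
    | rel hab => exact List.Lex.rel hab
    | cons h' =>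
      refine List.Lex.cons (lex_stable x y ?_ ?_ z z' h' s s')
      · exact fun hp => hy (List.cons_prefix_cons.mpr ⟨rfl, hp⟩)
      · exact fun hp => hx (List.cons_prefix_cons.mpr ⟨rfl, hp⟩)

private lemma lex_append_left_cancel : ∀ (a x y : List α),
    List.Lex (· < ·) (a ++ x) (a ++ y) → List.Lex (· < ·) x y
  | [], _, _, h => h
  | c :: a, x, y, h => by
    cases h with
    | rel hcc => exact absurd hcc (lt_irrefl c)
    | cons h' => exact lex_append_left_cancel a x y h'

private lemma lex_total_of_ne : ∀ (x y : List α), x ≠ y →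
    List.Lex (· < ·) x y ∨ List.Lex (· < ·) y x
  | [], [], h => absurd rfl h
  | [], _ :: _, _ => Or.inl List.Lex.nil
  | _ :: _, [], _ => Or.inr List.Lex.nil
  | a :: x, b :: y, h => by
    rcases lt_trichotomy a b with hab | rfl | hab
    · exact Or.inl (List.Lex.rel hab)
    · rcases lex_total_of_ne x y (fun hxy => h (by rw [hxy])) with h' | h'
      · exact Or.inl (List.Lex.cons h')
      · exact Or.inr (List.Lex.cons h')
    · exact Or.inr (List.Lex.rel hab)

private lemma prefix_tail_eq (a : α) (v : List α) (h : v <+: a :: v) :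
    a :: v = v ++ [a] := by
  induction v generalizing a with
  | nil => rfl
  | cons b v ih =>
    obtain ⟨rfl, h2⟩ := List.cons_prefix_cons.mp h
    have := ih _ h2
    rw [List.cons_append, ← this]

end Aux

/-- `λ[i] = 1` iff the suffix at `i+1` is lexicographically smaller than the
suffix at `i`, i.e. iff `ISA[i+1] < ISA[i]`. (0-indexed.) -/
theorem lyndonArray_one_iff_isa_decreasing {α : Type*} [LinearOrder α] [Inhabited α]
    (T : List α) (n : ℕ) (hn : T.length = n) (hpos : 0 < n)
    (hsent : ∀ k, k + 1 < n → T[n - 1]! < T[k]!)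
    (ISA : ℕ → ℕ)
    (hISA : ∀ i < n, ∀ j < n, (ISA i < ISA j ↔ T.drop i < T.drop j))
    (lam : ℕ → ℕ) (hlam : IsLyndonArray T lam) :
    ∀ i, i + 1 < n → (lam i = 1 ↔ ISA (i + 1) < ISA i) := by
  intro i hi
  have hiT : i < T.length := by omega
  have hne : ∀ k l : ℕ, k < n → l < n → k ≠ l → T.drop k ≠ T.drop l := by
    intro k l hk hl hkl heq
    have := congrArg List.length heq
    simp only [List.length_drop, hn] at this
    omega
  rw [hISA (i+1) hi i (by omega)]
  -- Claim B : if 2 ≤ lam i then drop i < drop (i+1)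
  have claimB : 2 ≤ lam i → T.drop i < T.drop (i + 1) := by
    intro h2
    have hW := (hlam i hiT).1
    set w := (T.drop i).take (lam i) with hw
    have hwlen : w.length = min (lam i) (n - i) := by
      simp [hw, List.length_take, List.length_drop, hn]
    have hwlen2 : 2 ≤ w.length := by omega
    obtain ⟨a, v, hav⟩ : ∃ a v, w = a :: v :=
      List.exists_cons_of_ne_nil (by intro h; rw [h] at hwlen2; simp at hwlen2)
    have hv : v ≠ [] := by
      intro h; rw [hav, h] at hwlen2; simp at hwlen2
    have hLyn : w < v ++ [a] := hW.2 [a] v (by simpa using hav) (by simp) hv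
    have hnp : ¬ v <+: a :: v := by
      intro hp
      have := prefix_tail_eq a v hp
      rw [hav, this] at hLyn
      exact lt_irrefl _ hLyn
    have hnp2 : ¬ (a :: v) <+: v := by
      intro hp
      have := hp.length_le
      simp at this
    have e1 : T.drop i = (a :: v) ++ (T.drop i).drop (lam i) := by
      rw [← hav, hw, List.take_append_drop]
    have e2 : T.drop (i + 1) = v ++ (T.drop i).drop (lam i) := by
      conv_lhs => rw [← List.drop_drop, e1]
      simp
    rw [e1, e2]
    refine lex_stable (a :: v) v hnp hnp2 [] [a] ?_ _ _
    rw [List.append_nil, ← hav]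
    exact hLyn
  -- Claim A : if drop i < drop (i+1) then 2 ≤ lam i
  have claimA : T.drop i < T.drop (i + 1) → 2 ≤ lam i := by
    intro hlt
    classical
    have hwit : ∃ k, i < k ∧ k < n ∧ T.drop k < T.drop i := by
      refine ⟨n - 1, by omega, by omega, ?_⟩
      have h1 : n - 1 < T.length := by omega
      have h2 : i < T.length := hiT
      rw [List.drop_eq_getElem_cons h1, List.drop_eq_getElem_cons h2]
      refine List.Lex.rel ?_
      have := hsent i hi
      rwa [getElem!_pos T (n-1) h1, getElem!_pos T i h2] at this
    obtain ⟨j, ⟨hij, hjn, hjlt⟩, hminP⟩ :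
        ∃ j, (i < j ∧ j < n ∧ T.drop j < T.drop i) ∧
          ∀ k < j, ¬ (i < k ∧ k < n ∧ T.drop k < T.drop i) :=
      ⟨Nat.find hwit, Nat.find_spec hwit, fun k hk => Nat.find_min hwit hk⟩
    have hmin : ∀ k, i < k → k < j → T.drop i < T.drop k := by
      intro k hik hkj
      have hkn : k < n := by omega
      rcases lex_total_of_ne (T.drop i) (T.drop k)
          (hne i k (by omega) hkn (by omega)) with h | h
      · exact h
      · exact absurd ⟨hik, hkn, h⟩ (hminP k hkj)
    have hij2 : i + 1 < j := by
      rcases Nat.lt_or_ge (i+1) j with h | h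
      · exact h
      · have : j = i + 1 := by omega
        rw [this] at hjlt
        exact absurd hjlt (asymm hlt)
    set m := j - i with hm
    set w := (T.drop i).take m with hw
    have hwlen : w.length = m := by
      simp only [hw, List.length_take, List.length_drop, hn]
      omega
    have e1 : T.drop i = w ++ T.drop j := by
      have hdj : T.drop j = (T.drop i).drop m := by
        rw [List.drop_drop]
        congr 1
        omega
      rw [hw, hdj, List.take_append_drop]
    have hwlyn : IsLyndon w := by
      constructor
      · intro h
        rw [h] at hwlen
        simp at hwlen
        omega
      · rintro u v huv hu hv
        have hu1 : 1 ≤ u.length := List.length_pos_iff.mpr hu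
        have hv1 : 1 ≤ v.length := List.length_pos_iff.mpr hv
        have huv' : u.length + v.length = m := by
          rw [← hwlen, huv]; simp
        rw [huv] at e1 ⊢
        have e2 : T.drop (i + u.length) = v ++ T.drop j := by
          rw [← List.drop_drop, e1, List.drop_append_of_le_length (by simp),
            List.drop_left]
        have hlt2 : T.drop i < T.drop (i + u.length) :=
          hmin (i + u.length) (by omega) (by omega)
        rw [e1, e2] at hlt2
        have hnp : ¬ v <+: u ++ v := by
          intro hp
          obtain ⟨r, hr⟩ := hp
          have e3 : T.drop (i + v.length) = r ++ T.drop j := by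
            rw [← List.drop_drop, e1, ← hr,
              List.drop_append_of_le_length (by simp), List.drop_left]
          have hc : T.drop (i + v.length) < T.drop j := by
            rw [e3]
            rw [← hr, List.append_assoc] at hlt2
            exact lex_append_left_cancel v _ _ hlt2
          have hc2 : T.drop i < T.drop (i + v.length) :=
            hmin (i + v.length) (by omega) (by omega)
          exact absurd (_root_.trans (_root_.trans hc2 hc) hjlt :
            T.drop i < T.drop i) (lt_irrefl _)
        have hnp2 : ¬ (u ++ v) <+: v := by
          intro hp
          have := hp.length_le
          rw [List.length_append] at this
          omega
        have := lex_stable (u ++ v) v hnp hnp2 _ _ hlt2 [] u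
        rwa [List.append_nil] at this
    have := (hlam i hiT).2 m (by omega) hwlyn
    omega
  -- lam i ≥ 1
  have hone : 1 ≤ lam i := by
    refine (hlam i hiT).2 1 (by omega) ?_
    have ht1 : (T.drop i).take 1 = [T[i]] := by
      rw [List.drop_eq_getElem_cons hiT]
      rfl
    rw [ht1]
    refine ⟨by simp, ?_⟩
    rintro u v huv hu hv
    have h1 : 1 ≤ u.length := List.length_pos_iff.mpr hu
    have h2 : 1 ≤ v.length := List.length_pos_iff.mpr hv
    have := congrArg List.length huv
    simp at this
    omega
  constructor
  · intro h1
    rcases lex_total_of_ne (T.drop (i+1)) (T.drop i)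
        (hne (i+1) i hi (by omega) (by omega)) with h | h
    · exact h
    · have := claimA h
      omega
  · intro h
    rcases Nat.lt_or_ge (lam i) 2 with h2 | h2
    · omega
    · exact absurd (claimB h2) (fun h' => asymm h' h)
end

section
/- Let A[1..n] be a permutation of {1,...,n} with A[n] = 1, and let S be the balanced parenthesis string of length 2n produced by the monotone-stack algorithm (pop all elements greater than A[i] emitting ')' per pop, then push A[i] emitting '(', finally pop the last element emitting ')'). Let o_i be the position in S of the i-th open parenthesis and c_i the position of its matching closed parenthesis. Then for all 1 ≤ i < n, (c_i − o_i + 1)/2 = NSV_A[i] − i, where NSV_A[i] = min({n+1} ∪ {j : i < j ≤ n, A[j] < A[i]}); and (c_n − o_n + 1)/2 = 1. -/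
/-- Pop all stack elements greater than `x`, emitting a closed parenthesis
(`false`) for each popped element. The head of the list is the top of the stack. -/
def popGT (x : ℕ) : List ℕ → List ℕ × List Bool
  | [] => ([], [])
  | y :: s =>
    if x < y then
      let p := popGT x s
      (p.1, false :: p.2)
    else (y :: s, [])

/-- Run the monotone-stack algorithm on `A 0, ..., A (i-1)`: for each element,
pop all stack elements greater than it (emitting `false` = ')' per pop), then
push it (emitting `true` = '('). Returns the final stack and the emitted output. -/
def runStack (A : ℕ → ℕ) : ℕ → List ℕ × List Bool
  | 0 => ([], [])
  | i + 1 =>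
    let r := runStack A i
    let p := popGT (A i) r.1
    (A i :: p.1, r.2 ++ p.2 ++ [true])

/-- The balanced parenthesis string of length `2n` produced by the monotone-stack
algorithm on `A[0..n-1]`: the output of the main loop followed by the final pop
of the remaining element (one closed parenthesis). `true` = '(' and `false` = ')'. -/
def bpString (A : ℕ → ℕ) (n : ℕ) : List Bool :=
  (runStack A n).2 ++ [false]

/-- Position (0-indexed) in `S` of the `(i+1)`-th open parenthesis (`true`). -/
noncomputable def openPos (S : List Bool) (i : ℕ) : ℕ :=
  sInf {p | p < S.length ∧ S.getD p false = true ∧ (S.take p).count true = i}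

/-- Position in `S` of the closed parenthesis matching the `(i+1)`-th open
parenthesis: the smallest position `c > openPos S i` holding a closed parenthesis
such that the segment `S[openPos S i .. c]` has equally many open and closed
parentheses. -/
noncomputable def closePos (S : List Bool) (i : ℕ) : ℕ :=
  sInf {c | openPos S i < c ∧ c < S.length ∧ S.getD c false = false ∧
    ((S.take (c + 1)).drop (openPos S i)).count true =
      ((S.take (c + 1)).drop (openPos S i)).count false}

namespace BPenc


/-- ghost stack of indices -/
def stk (A : ℕ → ℕ) : ℕ → List ℕ
  | 0 => []
  | i + 1 => i :: (stk A i).dropWhile (fun j => decide (A i < A j))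

/-- "j survives through step i-1": no smaller value strictly between -/
def Q (A : ℕ → ℕ) (j i : ℕ) : Prop := ∀ m < i, j < m → A j < A m

instance (A : ℕ → ℕ) (j i : ℕ) : Decidable (Q A j i) := by
  unfold Q; infer_instance

lemma popGT_eq (x : ℕ) (s : List ℕ) :
    popGT x s = (s.dropWhile (fun y => decide (x < y)),
      List.replicate (s.takeWhile (fun y => decide (x < y))).length false) := by
  induction s with
  | nil => rfl
  | cons y t ih =>
    by_cases h : x < y
    · simp [popGT, h, ih, List.dropWhile_cons, List.takeWhile_cons, List.replicate_succ]
    · simp [popGT, h, List.dropWhile_cons, List.takeWhile_cons]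

lemma runStack_fst (A : ℕ → ℕ) (i : ℕ) :
    (runStack A i).1 = (stk A i).map A := by
  induction i with
  | zero => rfl
  | succ i ih =>
    simp only [runStack, ih, popGT_eq, stk, List.map_cons, List.dropWhile_map]
    rfl

/-- number popped at step i -/
def kpop (A : ℕ → ℕ) (i : ℕ) : ℕ :=
  ((stk A i).takeWhile (fun j => decide (A i < A j))).length

lemma runStack_snd_succ (A : ℕ → ℕ) (i : ℕ) :
    (runStack A (i+1)).2 = (runStack A i).2 ++ List.replicate (kpop A i) false ++ [true] := by
  simp only [runStack, runStack_fst, popGT_eq, List.takeWhile_map, kpop, List.length_map]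
  rfl

def out (A : ℕ → ℕ) (i : ℕ) : List Bool := (runStack A i).2

def L (A : ℕ → ℕ) (i : ℕ) : ℕ := (stk A i).length

lemma out_succ (A : ℕ → ℕ) (i : ℕ) :
    out A (i+1) = out A i ++ List.replicate (kpop A i) false ++ [true] :=
  runStack_snd_succ A i

lemma L_succ (A : ℕ → ℕ) (i : ℕ) : L A (i+1) + kpop A i = L A i + 1 := by
  have h := congrArg List.length ((stk A i).takeWhile_append_dropWhile
    (p := fun j => decide (A i < A j)))
  simp only [List.length_append] at h
  simp only [L, stk, List.length_cons, kpop]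
  omega

lemma olen_add (A : ℕ → ℕ) (i : ℕ) : (out A i).length + L A i = 2 * i := by
  induction i with
  | zero => rfl
  | succ i ih =>
    have := L_succ A i
    simp only [out_succ, List.length_append, List.length_replicate, List.length_singleton]
    omega

lemma count_true_out (A : ℕ → ℕ) (i : ℕ) : (out A i).count true = i := by
  induction i with
  | zero => rfl
  | succ i ih =>
    simp [out_succ, List.count_append, ih, List.count_replicate]

lemma out_prefix (A : ℕ → ℕ) {i i' : ℕ} (h : i ≤ i') : out A i <+: out A i' := by
  induction i' with
  | zero => simp_all
  | succ i' ih =>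
    rcases Nat.lt_or_ge i (i'+1) with h' | h'
    · refine (ih (by omega)).trans ⟨List.replicate (kpop A i') false ++ [true], ?_⟩
      rw [out_succ, List.append_assoc]
    · have : i = i' + 1 := by omega
      subst this; exact List.prefix_refl _

lemma olen_mono (A : ℕ → ℕ) {i i' : ℕ} (h : i ≤ i') : (out A i).length ≤ (out A i').length :=
  (out_prefix A h).length_le

lemma olen_succ (A : ℕ → ℕ) (i : ℕ) :
    (out A (i+1)).length = (out A i).length + kpop A i + 1 := by
  simp [out_succ]; omega


lemma Q_mono {A : ℕ → ℕ} {j i i' : ℕ} (h : i ≤ i') (hq : Q A j i') : Q A j i :=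
  fun m hm hj => hq m (by omega) hj

lemma Q_extend {A : ℕ → ℕ} {k j i : ℕ} (hkj : k ≤ j) (hk : Q A k (j+1)) (hj : Q A j i) :
    Q A k i := by
  intro m hm hkm
  rcases Nat.lt_or_ge m (j+1) with h | h
  · exact hk m h hkm
  · rcases Nat.eq_or_lt_of_le hkj with rfl | hkj'
    · exact hj m hm (by omega)
    · exact lt_trans (hk j (by omega) hkj') (hj m hm (by omega))

section WithHyp

variable {A : ℕ → ℕ} {n : ℕ}

lemma dropWhile_eq_filter (x : ℕ) : ∀ (l : List ℕ), l.Pairwise (fun a b => A b < A a) →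
    l.dropWhile (fun j => decide (x < A j)) = l.filter (fun j => decide (A j ≤ x)) := by
  intro l
  induction l with
  | nil => intro _; rfl
  | cons a t ih =>
    intro hp
    rcases List.pairwise_cons.1 hp with ⟨h1, h2⟩
    by_cases h : x < A a
    · rw [List.dropWhile_cons_of_pos (by simpa using h), ih h2,
        List.filter_cons_of_neg (by simpa using h)]
    · rw [List.dropWhile_cons_of_neg (by simpa using h),
        List.filter_cons_of_pos (by simpa using Nat.le_of_not_lt h),
        List.filter_eq_self.2]
      intro b hb
      simpa using le_of_lt (lt_of_lt_of_le (h1 b hb) (Nat.le_of_not_lt h))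

lemma stk_inv (hinj : ∀ i < n, ∀ j < n, A i = A j → i = j) :
    ∀ i, i ≤ n → ((stk A i).Pairwise (· > ·) ∧ ∀ j, (j ∈ stk A i ↔ j < i ∧ Q A j i)) := by
  intro i
  induction i with
  | zero => exact fun _ => ⟨List.Pairwise.nil, by simp [stk, Q]⟩
  | succ i ih =>
    intro hin
    obtain ⟨hp, hm⟩ := ih (by omega)
    have hvp : (stk A i).Pairwise (fun a b => A b < A a) := by
      refine List.Pairwise.imp_of_mem ?_ hp
      intro a b ha hb hab
      exact ((hm b).1 hb).2 a ((hm a).1 ha).1 hab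
    have hstk : stk A (i+1) = i :: (stk A i).filter (fun j => decide (A j ≤ A i)) := by
      rw [stk, dropWhile_eq_filter _ _ hvp]
    constructor
    · rw [hstk]
      refine List.pairwise_cons.2 ⟨?_, List.Pairwise.sublist List.filter_sublist hp⟩
      intro b hb
      exact ((hm b).1 (List.mem_of_mem_filter hb)).1
    · intro j
      rw [hstk]
      simp only [List.mem_cons, List.mem_filter, decide_eq_true_eq, hm]
      constructor
      · rintro (rfl | ⟨⟨hji, hq⟩, hle⟩)
        · exact ⟨by omega, fun m hm1 hm2 => by omega⟩
        · refine ⟨by omega, fun m hm1 hm2 => ?_⟩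
          rcases Nat.lt_or_ge m i with h | h
          · exact hq m h hm2
          · have hmi : m = i := by omega
            rw [hmi]
            rcases Nat.lt_or_eq_of_le hle with h' | h'
            · exact h'
            · exact absurd (hinj j (by omega) i (by omega) h') (by omega)
      · rintro ⟨hj, hq⟩
        rcases Nat.lt_or_ge j i with h | h
        · exact Or.inr ⟨⟨h, Q_mono (by omega) hq⟩, le_of_lt (hq i (by omega) h)⟩
        · exact Or.inl (by omega)

lemma L_eq_card (hinj : ∀ i < n, ∀ j < n, A i = A j → i = j) {i : ℕ} (hi : i ≤ n) :
    L A i = ((Finset.range i).filter (fun j => Q A j i)).card := by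
  obtain ⟨hp, hm⟩ := stk_inv hinj i hi
  have hnd : (stk A i).Nodup := hp.imp (fun h => ne_of_gt h)
  have : (stk A i).toFinset = (Finset.range i).filter (fun j => Q A j i) := by
    ext j
    simp [List.mem_toFinset, hm j, Finset.mem_filter, Finset.mem_range]
  rw [← this, List.toFinset_card_of_nodup hnd]
  rfl

lemma L_lt (hinj : ∀ i < n, ∀ j < n, A i = A j → i = j) {j m : ℕ}
    (hjm : j < m) (hmn : m < n) (hq : Q A j (m+1)) :
    L A (j+1) + 1 ≤ L A (m+1) := by
  rw [L_eq_card hinj (by omega : j+1 ≤ n), L_eq_card hinj (by omega : m+1 ≤ n)]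
  have hsub : insert m ((Finset.range (j+1)).filter (fun k => Q A k (j+1))) ⊆
      (Finset.range (m+1)).filter (fun k => Q A k (m+1)) := by
    intro k hk
    rcases Finset.mem_insert.1 hk with rfl | hk'
    · exact Finset.mem_filter.2 ⟨Finset.mem_range.2 (by omega), fun m' h1 h2 => by omega⟩
    · rcases Finset.mem_filter.1 hk' with ⟨hk1, hk2⟩
      have hkj : k ≤ j := by have := Finset.mem_range.1 hk1; omega
      exact Finset.mem_filter.2 ⟨Finset.mem_range.2 (by omega), Q_extend hkj hk2 hq⟩
  have hnm : m ∉ (Finset.range (j+1)).filter (fun k => Q A k (j+1)) := by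
    simp only [Finset.mem_filter, Finset.mem_range]
    omega
  calc ((Finset.range (j+1)).filter (fun k => Q A k (j+1))).card + 1
      = (insert m ((Finset.range (j+1)).filter (fun k => Q A k (j+1)))).card := by
        rw [Finset.card_insert_of_notMem hnm]
    _ ≤ _ := Finset.card_le_card hsub

lemma L_split (hinj : ∀ i < n, ∀ j < n, A i = A j → i = j) {j p : ℕ}
    (hjp : j < p) (hpn : p ≤ n) (hq : Q A j p) :
    L A p = ((Finset.range p).filter (fun k => j < k ∧ Q A k p)).card + L A (j+1) := by
  rw [L_eq_card hinj hpn, L_eq_card hinj (by omega : j+1 ≤ n)]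
  have key := Finset.card_filter_add_card_filter_not
    (s := (Finset.range p).filter (fun k => Q A k p)) (p := fun k => j < k)
  have e1 : ((Finset.range p).filter (fun k => Q A k p)).filter (fun k => j < k)
      = (Finset.range p).filter (fun k => j < k ∧ Q A k p) := by
    ext k
    simp only [Finset.mem_filter, Finset.mem_range]
    tauto
  have e2 : ((Finset.range p).filter (fun k => Q A k p)).filter (fun k => ¬ j < k)
      = (Finset.range (j+1)).filter (fun k => Q A k (j+1)) := by
    ext k
    simp only [Finset.mem_filter, Finset.mem_range]
    constructor
    · rintro ⟨⟨hk1, hk2⟩, hk3⟩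
      exact ⟨by omega, Q_mono (by omega) hk2⟩
    · rintro ⟨hk1, hk2⟩
      have hkj : k ≤ j := by omega
      exact ⟨⟨by omega, Q_extend hkj hk2 hq⟩, by omega⟩
  rw [e1, e2] at key
  omega

lemma L_p1_le (hinj : ∀ i < n, ∀ j < n, A i = A j → i = j) {j p : ℕ}
    (hjp : j < p) (hpn : p < n) (hq : Q A j p) (hAp : A p < A j) :
    L A (p+1) ≤ L A (j+1) := by
  rw [L_eq_card hinj (by omega : p+1 ≤ n), L_eq_card hinj (by omega : j+1 ≤ n)]
  have hjns : j ∉ (Finset.range (p+1)).filter (fun k => Q A k (p+1)) := by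
    simp only [Finset.mem_filter, Finset.mem_range]
    rintro ⟨-, hQj⟩
    exact absurd (hQj p (by omega) hjp) (by omega)
  refine Finset.card_le_card_of_injOn (fun k => if k < p then k else j) ?_ ?_
  · intro k hk
    rcases Finset.mem_filter.1 hk with ⟨hk1, hk2⟩
    have hk1' := Finset.mem_range.1 hk1
    simp only
    by_cases hkp : k < p
    · rw [if_pos hkp]
      have hkj : k ≤ j := by
        by_contra hc
        have h1 : A j < A k := hq k (by omega) (by omega)
        have h2 : A k < A p := hk2 p (by omega) (by omega)
        omega
      exact Finset.mem_filter.2 ⟨Finset.mem_range.2 (by omega),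
        Q_mono (by omega) hk2⟩
    · rw [if_neg hkp]
      exact Finset.mem_filter.2 ⟨Finset.mem_range.2 (by omega),
        fun m' h1 h2 => by omega⟩
  · intro a ha b hb hab
    simp only [Finset.mem_coe] at ha hb
    simp only at hab
    have har := Finset.mem_range.1 (Finset.mem_filter.1 ha).1
    have hbr := Finset.mem_range.1 (Finset.mem_filter.1 hb).1
    by_cases hap : a < p <;> by_cases hbp : b < p
    · rwa [if_pos hap, if_pos hbp] at hab
    · rw [if_pos hap, if_neg hbp] at hab
      subst hab
      exact absurd ha hjns
    · rw [if_neg hap, if_pos hbp] at hab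
      exact absurd (hab ▸ hb) hjns
    · omega

end WithHyp

end BPenc

namespace BPenc

lemma count_tf : ∀ (l : List Bool), l.count true + l.count false = l.length := by
  intro l
  induction l with
  | nil => rfl
  | cons a t ih => cases a <;> simp [List.count_cons] <;> omega

lemma getD_append_cons (l₁ l₂ : List Bool) (b : Bool) :
    (l₁ ++ b :: l₂).getD l₁.length false = b := by
  induction l₁ with
  | nil => rfl
  | cons a t ih => simpa using ih

section Main

variable {A : ℕ → ℕ} {n : ℕ}

lemma L_n (hpos : 0 < n) (hinj : ∀ i < n, ∀ j < n, A i = A j → i = j)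
    (hmin : A (n - 1) = 0) : L A n = 1 := by
  rw [L_eq_card hinj (le_refl n)]
  have : (Finset.range n).filter (fun j => Q A j n) = {n - 1} := by
    ext j
    simp only [Finset.mem_filter, Finset.mem_range, Finset.mem_singleton]
    constructor
    · rintro ⟨hj, hQ⟩
      by_contra hne
      have hj' : j < n - 1 := by omega
      have := hQ (n-1) (by omega) (by omega)
      rw [hmin] at this
      omega
    · rintro rfl
      exact ⟨by omega, fun m h1 h2 => by omega⟩
  rw [this, Finset.card_singleton]

lemma S_len (hpos : 0 < n) (hinj : ∀ i < n, ∀ j < n, A i = A j → i = j)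
    (hmin : A (n - 1) = 0) : (bpString A n).length = 2 * n := by
  have h1 := olen_add A n
  have h2 := L_n hpos hinj hmin
  simp only [bpString, List.length_append, List.length_singleton]
  have : (out A n).length = (runStack A n).2.length := rfl
  omega

lemma S_decomp {j : ℕ} (hj : j + 1 ≤ n) : ∃ t,
    bpString A n = (out A j ++ List.replicate (kpop A j) false) ++ true :: t := by
  obtain ⟨t, ht⟩ := out_prefix A hj
  refine ⟨t ++ [false], ?_⟩
  have : bpString A n = out A (j+1) ++ (t ++ [false]) := by
    rw [← List.append_assoc, ht]
    rfl
  rw [this, out_succ, List.append_assoc, List.append_assoc, List.singleton_append,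
    ← List.append_assoc]

lemma S_getD_open {j : ℕ} (hj : j < n) :
    (bpString A n).getD ((out A j).length + kpop A j) false = true := by
  obtain ⟨t, ht⟩ := S_decomp (A := A) (n := n) (show j + 1 ≤ n by omega)
  rw [ht]
  have hl : (out A j ++ List.replicate (kpop A j) false).length
      = (out A j).length + kpop A j := by simp
  rw [← hl, getD_append_cons]

lemma getD_middle (l1 l2 : List Bool) {E k : ℕ} (hEk : E < k) :
    ((l1 ++ List.replicate k false) ++ l2).getD (l1.length + E) false = false := by
  have heq : (l1 ++ List.replicate k false) ++ l2
      = (l1 ++ List.replicate E false) ++ false :: (List.replicate (k - E - 1) false ++ l2) := by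
    conv_lhs => rw [show k = E + ((k - E - 1) + 1) by omega]
    simp [List.replicate_add, List.replicate_succ, List.append_assoc]
  have hl : (l1 ++ List.replicate E false).length = l1.length + E := by simp
  rw [heq, ← hl, getD_append_cons]

lemma S_getD_close {p E : ℕ} (hp : p < n) (hE : E < kpop A p) :
    (bpString A n).getD ((out A p).length + E) false = false := by
  obtain ⟨t, ht⟩ := S_decomp (A := A) (n := n) (show p + 1 ≤ n by omega)
  rw [ht]
  have hl : (out A p).length + E = (out A p).length + E := rfl
  exact getD_middle (out A p) (true :: t) hE

lemma count_take_eq (hpos : 0 < n) {m q : ℕ} (hmn : m < n)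
    (h1 : (out A m).length ≤ q) (h2 : q < (out A (m+1)).length) :
    ((bpString A n).take q).count true = m := by
  obtain ⟨t, ht⟩ := out_prefix A (show m + 1 ≤ n by omega)
  have hS : bpString A n = out A (m+1) ++ (t ++ [false]) := by
    rw [← List.append_assoc, ht]
    rfl
  rw [hS, List.take_append_of_le_length (by omega)]
  rw [out_succ]
  have hlen : (out A m ++ List.replicate (kpop A m) false).length
      = (out A m).length + kpop A m := by simp
  have hq : q ≤ (out A m).length + kpop A m := by
    have := olen_succ A m
    omega
  rw [List.take_append_of_le_length (by rw [hlen]; omega)]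
  rw [List.take_append, List.take_of_length_le h1,
    List.count_append, count_true_out, List.take_replicate, List.count_replicate]
  simp

lemma count_take_lt (S : List Bool) {q q' : ℕ} (hq : q < q') (hq' : q' ≤ S.length)
    (hget : S.getD q false = true) :
    (S.take q).count true < (S.take q').count true := by
  have hqlen : q < S.length := by omega
  have hgetelem : S[q] = true := by
    rw [List.getD_eq_getElem?_getD, List.getElem?_eq_getElem hqlen] at hget
    simpa using hget
  have h1 : S.take (q+1) = S.take q ++ [true] := by
    rw [List.take_succ, List.getElem?_eq_getElem hqlen, hgetelem]
    rfl
  have h2 : (S.take (q+1)).count true = (S.take q).count true + 1 := by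
    rw [h1, List.count_append]
    simp
  have h3 : S.take (q+1) <+: S.take q' := by
    have := List.take_prefix (q+1) (S.take q')
    rwa [List.take_take, min_eq_left (by omega)] at this
  have h4 := (h3.sublist).count_le true
  omega

lemma exists_region (A : ℕ → ℕ) : ∀ (i1 q : ℕ), q < (out A i1).length →
    ∃ m, m < i1 ∧ (out A m).length ≤ q ∧ q < (out A (m+1)).length := by
  intro i1
  induction i1 with
  | zero => intro q hq; simp [out, runStack] at hq
  | succ i1 ih =>
    intro q hq
    by_cases h : q < (out A i1).length
    · obtain ⟨m, hm1, hm2, hm3⟩ := ih q h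
      exact ⟨m, by omega, hm2, hm3⟩
    · exact ⟨i1, by omega, by omega, hq⟩

lemma seg_split (S : List Bool) (o c : ℕ) (ho : o ≤ c) :
    S.take c = S.take o ++ (S.take c).drop o := by
  conv_lhs => rw [← List.take_append_drop o (S.take c)]
  rw [List.take_take, min_eq_left ho]

lemma openPos_eq (hpos : 0 < n) (hinj : ∀ i < n, ∀ j < n, A i = A j → i = j)
    (hmin : A (n - 1) = 0) {j : ℕ} (hj : j < n) :
    openPos (bpString A n) j = (out A j).length + kpop A j := by
  set S := bpString A n with hSdef
  set o := (out A j).length + kpop A j with hodef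
  have hSlen : S.length = 2 * n := S_len hpos hinj hmin
  have ho1 : o + 1 = (out A (j+1)).length := by rw [olen_succ]
  have holt : (out A (j+1)).length ≤ (out A n).length := olen_mono A hj
  have houtn : (out A n).length + L A n = 2 * n := olen_add A n
  have hLn : L A n = 1 := L_n hpos hinj hmin
  have hmem : o ∈ {p | p < S.length ∧ S.getD p false = true ∧ (S.take p).count true = j} := by
    refine ⟨by omega, S_getD_open hj, ?_⟩
    exact count_take_eq hpos hj (by omega) (by omega)
  have huniq : ∀ x ∈ {p | p < S.length ∧ S.getD p false = true ∧ (S.take p).count true = j},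
      x = o := by
    rintro x ⟨hx1, hx2, hx3⟩
    rcases lt_trichotomy x o with h | h | h
    · have := count_take_lt S h (by omega) hx2
      rw [hx3, hmem.2.2] at this
      omega
    · exact h
    · have := count_take_lt S h (by omega) hmem.2.1
      rw [hx3, hmem.2.2] at this
      omega
  exact huniq _ (Nat.sInf_mem ⟨o, hmem⟩)

lemma closePos_spec (hpos : 0 < n) (hinj : ∀ i < n, ∀ j < n, A i = A j → i = j)
    (hmin : A (n - 1) = 0) {j p : ℕ}
    (hjp : j < p) (hpn : p < n) (hq : Q A j p) (hAp : A p < A j) :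
    closePos (bpString A n) j + 1 = openPos (bpString A n) j + 2 * (p - j) ∧
      openPos (bpString A n) j < closePos (bpString A n) j := by
  have hjn : j < n := by omega
  set S := bpString A n with hSdef
  have hSlen : S.length = 2 * n := S_len hpos hinj hmin
  have hopen : openPos S j = (out A j).length + kpop A j := openPos_eq hpos hinj hmin hjn
  set o := (out A j).length + kpop A j with hodef
  set E := ((Finset.range p).filter (fun k => j < k ∧ Q A k p)).card with hEdef
  set c := (out A p).length + E with hcdef
  have hLp : L A p = E + L A (j+1) := L_split hinj hjp (le_of_lt hpn) hq
  have hLp1 : L A (p+1) ≤ L A (j+1) := L_p1_le hinj hjp hpn hq hAp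
  have hLs : L A (p+1) + kpop A p = L A p + 1 := L_succ A p
  have hEk : E < kpop A p := by omega
  have h_oj : (out A (j+1)).length = o + 1 := by rw [olen_succ]
  have hoa_j1 : (out A (j+1)).length + L A (j+1) = 2*(j+1) := olen_add A (j+1)
  have hoa_p : (out A p).length + L A p = 2*p := olen_add A p
  have hoa_p1 : (out A (p+1)).length + L A (p+1) = 2*(p+1) := olen_add A (p+1)
  have h_c1 : c + 1 = o + 2 * (p - j) := by omega
  have hole : (out A (p+1)).length ≤ (out A n).length := olen_mono A (by omega)
  have houtn : (out A n).length + L A n = 2 * n := olen_add A n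
  have hLn : L A n = 1 := L_n hpos hinj hmin
  have hco : o < c := by omega
  have hcS : c + 1 < (out A (p+1)).length := by
    rw [olen_succ]
    omega
  have hT0 : (S.take o).count true = j :=
    count_take_eq hpos hjn (by omega) (by omega)
  have hmem : c ∈ {x | openPos S j < x ∧ x < S.length ∧ S.getD x false = false ∧
      ((S.take (x + 1)).drop (openPos S j)).count true =
        ((S.take (x + 1)).drop (openPos S j)).count false} := by
    refine ⟨by omega, by omega, S_getD_close hpn hEk, ?_⟩
    rw [hopen]
    have hT1 : (S.take (c+1)).count true = p :=
      count_take_eq hpos hpn (by omega) (by omega)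
    have hsplit : S.take (c+1) = S.take o ++ (S.take (c+1)).drop o :=
      seg_split S o (c+1) (by omega)
    have hcnt := congrArg (List.count true) hsplit
    rw [List.count_append] at hcnt
    have hlen := congrArg List.length hsplit
    rw [List.length_append, List.length_take, List.length_take,
      min_eq_left (by omega), min_eq_left (by omega)] at hlen
    have htf := count_tf ((S.take (c+1)).drop o)
    omega
  have hlb : ∀ x ∈ {x | openPos S j < x ∧ x < S.length ∧ S.getD x false = false ∧
      ((S.take (x + 1)).drop (openPos S j)).count true =
        ((S.take (x + 1)).drop (openPos S j)).count false}, c ≤ x := by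
    rintro x ⟨hx1, hx2, hx3, hx4⟩
    rw [hopen] at hx1
    by_contra hxc
    push_neg at hxc
    obtain ⟨m, hm1, hm2, hm3⟩ := exists_region A (p+1) (x+1) (by omega)
    have hmn : m < n := by omega
    have hTx : (S.take (x+1)).count true = m := count_take_eq hpos hmn hm2 hm3
    have hsplit : S.take (x+1) = S.take o ++ (S.take (x+1)).drop o :=
      seg_split S o (x+1) (by omega)
    have hcnt := congrArg (List.count true) hsplit
    rw [List.count_append] at hcnt
    have hlen := congrArg List.length hsplit
    rw [List.length_append, List.length_take, List.length_take,
      min_eq_left (by omega), min_eq_left (by omega)] at hlen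
    have htf := count_tf ((S.take (x+1)).drop o)
    rw [hopen] at hx4
    by_cases hmj : m ≤ j
    · have := olen_mono A (show m+1 ≤ j+1 by omega)
      omega
    · by_cases hmp : m = p
      · subst hmp
        omega
      · have hmp' : m < p := by omega
        have hLm : L A (j+1) + 1 ≤ L A (m+1) :=
          L_lt hinj (by omega) (by omega) (Q_mono (by omega) hq)
        have hoam1 : (out A (m+1)).length + L A (m+1) = 2*(m+1) := olen_add A (m+1)
        omega
  have hmemS := Nat.sInf_mem (⟨c, hmem⟩ : Set.Nonempty _)
  have h1 : closePos S j ≤ c := Nat.sInf_le hmem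
  have h2 : c ≤ closePos S j := hlb _ hmemS
  omega

theorem bpString_encodes_nsv' (n : ℕ) (hpos : 0 < n) (A : ℕ → ℕ)
    (hlt : ∀ i < n, A i < n)
    (hinj : ∀ i < n, ∀ j < n, A i = A j → i = j)
    (hmin : A (n - 1) = 0) :
    (∀ i, i + 1 < n →
      (closePos (bpString A n) i - openPos (bpString A n) i + 1) / 2 =
        sInf ({n} ∪ {j | i < j ∧ j < n ∧ A j < A i} : Set ℕ) - i) ∧
    (closePos (bpString A n) (n - 1) - openPos (bpString A n) (n - 1) + 1) / 2 = 1 := by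
  constructor
  · intro i hi
    set p := sInf ({n} ∪ {j | i < j ∧ j < n ∧ A j < A i} : Set ℕ) with hpdef
    have hpmem : p ∈ ({n} ∪ {j | i < j ∧ j < n ∧ A j < A i} : Set ℕ) :=
      Nat.sInf_mem ⟨n, Or.inl rfl⟩
    have hAi0 : A i ≠ 0 := by
      intro h
      have : i = n - 1 := hinj i (by omega) (n-1) (by omega) (by rw [h, hmin])
      omega
    have hple : p ≤ n - 1 := Nat.sInf_le (Or.inr ⟨by omega, by omega, by rw [hmin]; omega⟩)
    have hpprops : i < p ∧ p < n ∧ A p < A i := by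
      rcases hpmem with h | h
      · simp only [Set.mem_singleton_iff] at h
        omega
      · exact h
    obtain ⟨hip, hpn', hApAi⟩ := hpprops
    have hQ : Q A i p := by
      intro m hm him
      by_contra hc
      push_neg at hc
      rcases Nat.lt_or_eq_of_le hc with h' | h'
      · have : p ≤ m := Nat.sInf_le (Or.inr ⟨him, by omega, h'⟩)
        omega
      · have : m = i := hinj m (by omega) i (by omega) h'
        omega
    obtain ⟨hspec, hlt'⟩ := closePos_spec hpos hinj hmin hip hpn' hQ hApAi
    have h2 : closePos (bpString A n) i - openPos (bpString A n) i + 1 = 2 * (p - i) := by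
      omega
    rw [h2]
    omega
  · set S := bpString A n with hSdef
    have hn1 : n - 1 < n := by omega
    have hopen : openPos S (n-1) = (out A (n-1)).length + kpop A (n-1) :=
      openPos_eq hpos hinj hmin hn1
    have hSlen : S.length = 2 * n := S_len hpos hinj hmin
    have houtn : (out A n).length + L A n = 2 * n := olen_add A n
    have hLn : L A n = 1 := L_n hpos hinj hmin
    have h_on : (out A n).length = (out A (n-1)).length + kpop A (n-1) + 1 := by
      have := olen_succ A (n-1)
      rw [show n - 1 + 1 = n by omega] at this
      exact this
    set o := (out A (n-1)).length + kpop A (n-1) with hodef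
    have ho : o = 2 * n - 2 := by omega
    have hSeq : S = (out A (n-1) ++ List.replicate (kpop A (n-1)) false) ++ [true, false] := by
      rw [hSdef, bpString]
      have : (runStack A n).2 = out A n := rfl
      rw [this]
      conv_lhs => rw [show n = (n-1) + 1 by omega, out_succ]
      simp [List.append_assoc]
    have hlo : (out A (n-1) ++ List.replicate (kpop A (n-1)) false).length = o := by simp [hodef]
    have hgd : S.getD (2*n - 1) false = false := by
      rw [hSeq]
      have : (2*n - 1) = (out A (n-1) ++ List.replicate (kpop A (n-1)) false ++ [true]).length := by
        simp
        omega
      rw [this]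
      have heq : (out A (n-1) ++ List.replicate (kpop A (n-1)) false) ++ [true, false]
          = (out A (n-1) ++ List.replicate (kpop A (n-1)) false ++ [true]) ++ false :: [] := by
        simp
      rw [heq, getD_append_cons]
    have hseg : (S.take (2*n - 1 + 1)).drop o = [true, false] := by
      rw [show 2*n - 1 + 1 = 2*n by omega, ← hSlen, List.take_length, hSeq, ← hlo,
        List.drop_left]
    have hmem : (2*n - 1) ∈ {x | openPos S (n-1) < x ∧ x < S.length ∧
        S.getD x false = false ∧
        ((S.take (x + 1)).drop (openPos S (n-1))).count true =
          ((S.take (x + 1)).drop (openPos S (n-1))).count false} := by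
      refine ⟨by omega, by omega, hgd, ?_⟩
      rw [hopen]
      rw [hseg]
      rfl
    have huniq : ∀ x ∈ {x | openPos S (n-1) < x ∧ x < S.length ∧
        S.getD x false = false ∧
        ((S.take (x + 1)).drop (openPos S (n-1))).count true =
          ((S.take (x + 1)).drop (openPos S (n-1))).count false}, x = 2*n - 1 := by
      rintro x ⟨hx1, hx2, -, -⟩
      rw [hopen] at hx1
      omega
    have hclose : closePos S (n-1) = 2*n - 1 :=
      huniq _ (Nat.sInf_mem ⟨2*n - 1, hmem⟩)
    rw [hclose, hopen]
    omega

end Main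
end BPenc

/-- Lemma (bp): in the balanced parenthesis string produced by the monotone-stack
algorithm from `A`, letting `o_i`/`c_i` be the positions of the `(i+1)`-th open
parenthesis and of its matching closed parenthesis, `(c_i - o_i + 1)/2` equals
`NSV_A[i] - i` for `i < n-1`, and equals `1` for the last position. (0-indexed;
the default NSV value is `n`.) -/
theorem bpString_encodes_nsv (n : ℕ) (hpos : 0 < n) (A : ℕ → ℕ)
    (hlt : ∀ i < n, A i < n)
    (hinj : ∀ i < n, ∀ j < n, A i = A j → i = j)
    (hmin : A (n - 1) = 0) :
    (∀ i, i + 1 < n →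
      (closePos (bpString A n) i - openPos (bpString A n) i + 1) / 2 =
        sInf ({n} ∪ {j | i < j ∧ j < n ∧ A j < A i} : Set ℕ) - i) ∧
    (closePos (bpString A n) (n - 1) - openPos (bpString A n) (n - 1) + 1) / 2 = 1 := by
  exact BPenc.bpString_encodes_nsv' n hpos A hlt hinj hmin
end

section
/- Let T be a string of length n with unique minimal sentinel, and define the BWT string L by L[i] = T[SA[i] − 1] if SA[i] ≠ 1 and L[i] = T[n] otherwise. Define LF as the map sending i to ISA[SA[i] − 1] (with LF(ISA[1]) = 1). Then the right-to-left decoding pos_0 = 1, T'[n] = sentinel, and for i = n−1 down to 1: T'[i] = L[pos], pos ← LF(pos), reconstructs T exactly: T' = T. -/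
/-- Correctness of Burrows-Wheeler inversion via the LF-mapping: decoding
right-to-left with `pos₀ = 0`, `T'[n-1] =` sentinel and `T'[i] = L[pos]`,
`pos ← LF pos` reconstructs `T`: for every `i` with `i + 1 < n`,
`T[i] = L (LF^[n-2-i] 0)`. (0-indexed.) -/
theorem bwt_inversion_correct {α : Type*} [LinearOrder α] [Inhabited α]
    (T : List α) (n : ℕ) (hn : T.length = n) (hpos : 0 < n)
    (hsent : ∀ k, k + 1 < n → T[n - 1]! < T[k]!)
    (SA ISA LF : ℕ → ℕ) (L : ℕ → α)
    (hSAlt : ∀ i < n, SA i < n) (hISAlt : ∀ i < n, ISA i < n)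
    (hinv1 : ∀ i < n, ISA (SA i) = i) (hinv2 : ∀ i < n, SA (ISA i) = i)
    (hord : ∀ i < n, ∀ j < n, (ISA i < ISA j ↔ T.drop i < T.drop j))
    (hL : ∀ i < n, L i = if SA i = 0 then T[n - 1]! else T[SA i - 1]!)
    (hLF : ∀ i < n, LF i = if SA i = 0 then ISA (n - 1) else ISA (SA i - 1)) :
    ∀ i, i + 1 < n → T[i]! = L (LF^[n - 2 - i] 0) := by
  have hn1 : n - 1 < n := Nat.sub_lt hpos one_pos
  -- drop (n-1) is a singleton, and it's the smallest suffix
  have hdropmin : ∀ i, i + 1 < n → T.drop (n - 1) < T.drop i := by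
    intro i hi
    have hiT : i < T.length := by omega
    have hn1T : n - 1 < T.length := by omega
    have h1 : T.drop (n - 1) = [T[n - 1]] := by
      rw [List.drop_eq_getElem_cons hn1T]
      have : T.drop (n - 1 + 1) = [] := by
        apply List.drop_eq_nil_of_le; omega
      rw [this]
    have h2 : T.drop i = T[i] :: T.drop (i + 1) := List.drop_eq_getElem_cons hiT
    rw [h1, h2]
    have hlt : T[n - 1] < T[i] := by
      have := hsent i hi
      rwa [getElem!_pos T (n-1) hn1T, getElem!_pos T i hiT] at this
    exact List.Lex.rel hlt
  have hISA0 : ISA (n - 1) = 0 := by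
    by_contra h
    have hSA0 : SA 0 < n := hSAlt 0 hpos
    have hne : SA 0 ≠ n - 1 := by
      intro he
      have := hinv1 0 hpos
      rw [he] at this; omega
    have hSA0' : SA 0 + 1 < n := by omega
    have := (hord (n - 1) hn1 (SA 0) hSA0).mpr (hdropmin (SA 0) hSA0')
    rw [hinv1 0 hpos] at this
    omega
  have key : ∀ k, k ≤ n - 1 → LF^[k] 0 = ISA (n - 1 - k) := by
    intro k
    induction k with
    | zero => intro _; simpa using hISA0.symm
    | succ k ih =>
      intro hk
      have hk' : k ≤ n - 1 := by omega
      rw [Function.iterate_succ_apply', ih hk']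
      have hm : n - 1 - k < n := by omega
      have hmpos : 0 < n - 1 - k := by omega
      have hI : ISA (n - 1 - k) < n := hISAlt _ hm
      rw [hLF _ hI, hinv2 _ hm, if_neg (by omega)]
      congr 1
  intro i hi
  have hk : n - 2 - i ≤ n - 1 := by omega
  rw [key _ hk]
  have h1 : n - 1 - (n - 2 - i) = i + 1 := by omega
  rw [h1]
  have hi1 : i + 1 < n := hi
  have hI : ISA (i + 1) < n := hISAlt _ hi1
  rw [hL _ hI, hinv2 _ hi1, if_neg (by omega)]
  simp
end

section
/- Let A[1..n] be a permutation of {1,...,n} with A[n] = 1, and let S be the length-2n balanced parenthesis string produced by the monotone-stack algorithm. Then the open parenthesis written at step j lies strictly between the open parenthesis of step i and its matching closed parenthesis if and only if i < j < NSV_A[i], where NSV_A[i] = min({n+1} ∪ {k : i < k ≤ n, A[k] < A[i]}). Consequently the number of parenthesis pairs nested directly inside pair i at top level counts positions in the interval (i, NSV_A[i]). -/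
namespace BPAux

lemma popGT_eq (x : ℕ) (s : List ℕ) :
    popGT x s = (s.dropWhile (fun y => decide (x < y)),
      List.replicate (s.takeWhile (fun y => decide (x < y))).length false) := by
  induction s with
  | nil => rfl
  | cons y s ih =>
    by_cases h : x < y <;> simp [popGT, h, ih, List.replicate_succ]

def kk (A : ℕ → ℕ) (i : ℕ) : ℕ :=
  ((runStack A i).1.takeWhile (fun y => decide (A i < y))).length

lemma stack_succ (A : ℕ → ℕ) (i : ℕ) :
    (runStack A (i + 1)).1 = A i :: (runStack A i).1.dropWhile (fun y => decide (A i < y)) := by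
  simp [runStack, popGT_eq]

lemma out_succ (A : ℕ → ℕ) (i : ℕ) :
    (runStack A (i + 1)).2 = (runStack A i).2 ++ List.replicate (kk A i) false ++ [true] := by
  simp [runStack, popGT_eq, kk]

lemma count_true (A : ℕ → ℕ) : ∀ l, ((runStack A l).2).count true = l
  | 0 => rfl
  | l + 1 => by
    rw [out_succ]
    simp [List.count_append, count_true A l, List.count_replicate]

lemma tw_dw (A : ℕ → ℕ) (l : ℕ) :
    kk A l + ((runStack A l).1.dropWhile (fun y => decide (A l < y))).length
      = (runStack A l).1.length := by
  rw [kk, ← List.length_append, List.takeWhile_append_dropWhile]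

lemma st_kk (A : ℕ → ℕ) (l : ℕ) :
    (runStack A (l + 1)).1.length + kk A l = (runStack A l).1.length + 1 := by
  have := tw_dw A l
  rw [stack_succ]
  simp only [List.length_cons]
  omega

lemma len_sum (A : ℕ → ℕ) : ∀ l, ((runStack A l).2).length + ((runStack A l).1).length = 2 * l
  | 0 => rfl
  | l + 1 => by
    have h := len_sum A l
    have h2 := tw_dw A l
    rw [out_succ, stack_succ]
    simp only [List.length_append, List.length_replicate, List.length_cons,
      List.length_singleton, List.length_nil]
    omega

lemma out_len_succ (A : ℕ → ℕ) (l : ℕ) :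
    (runStack A (l + 1)).2.length = (runStack A l).2.length + kk A l + 1 := by
  rw [out_succ]; simp; omega

lemma out_prefix (A : ℕ → ℕ) {i j : ℕ} (h : i ≤ j) :
    (runStack A i).2 <+: (runStack A j).2 := by
  induction j, h using Nat.le_induction with
  | base => exact List.prefix_refl _
  | succ j hij ih =>
    exact ih.trans ⟨List.replicate (kk A j) false ++ [true], by rw [out_succ]; simp⟩

lemma out_len_le (A : ℕ → ℕ) {i j : ℕ} (h : i ≤ j) :
    (runStack A i).2.length ≤ (runStack A j).2.length :=
  (out_prefix A h).length_le

lemma out_prefix_bp (A : ℕ → ℕ) {l n : ℕ} (h : l ≤ n) :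
    (runStack A l).2 <+: bpString A n :=
  (out_prefix A h).trans ⟨[false], rfl⟩

lemma stack_structure (A : ℕ → ℕ) (i : ℕ) : ∀ {l : ℕ}, i < l →
    (∀ k, i < k → k < l → A i < A k) →
    ∃ t, (runStack A l).1 = t ++ (runStack A (i + 1)).1 ∧ ∀ x ∈ t, A i < x := by
  intro l hil h
  induction l, hil using Nat.le_induction with
  | base => exact ⟨[], rfl, by simp⟩
  | succ l hl ih =>
    obtain ⟨t, ht, htgt⟩ := ih (fun k hk1 hk2 => h k hk1 (by omega))
    have hAl : A i < A l := h l (by omega) (by omega)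
    rw [stack_succ, ht, List.dropWhile_append]
    by_cases hc : (t.dropWhile (fun y => decide (A l < y))).isEmpty
    · rw [if_pos hc]
      refine ⟨[A l], ?_, by simpa using hAl⟩
      rw [stack_succ A i, List.dropWhile_cons]
      simp [Nat.not_lt.mpr (le_of_lt hAl)]
    · rw [if_neg hc]
      refine ⟨A l :: t.dropWhile (fun y => decide (A l < y)), by simp, ?_⟩
      intro x hx
      rcases List.mem_cons.mp hx with h | h
      · exact h ▸ hAl
      · exact htgt x (List.dropWhile_sublist _ |>.subset h)


lemma bp_len (A : ℕ → ℕ) (n : ℕ) :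
    (bpString A n).length = (runStack A n).2.length + 1 := by
  simp [bpString]

lemma take_of_prefix {Q S : List Bool} (h : Q <+: S) : S.take Q.length = Q := by
  obtain ⟨t, rfl⟩ := h
  simp

lemma ct_at (A : ℕ → ℕ) (n : ℕ) {l r : ℕ} (hln : l < n) (hr : r ≤ kk A l) :
    ((bpString A n).take ((runStack A l).2.length + r)).count true = l := by
  have h1 : (runStack A l).2 ++ List.replicate r false <+: (runStack A (l + 1)).2 := by
    have hrep : List.replicate (kk A l) false
        = List.replicate r false ++ List.replicate (kk A l - r) false := by
      rw [← List.replicate_add]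
      congr 1
      omega
    refine ⟨List.replicate (kk A l - r) false ++ [true], ?_⟩
    rw [out_succ, hrep]
    simp only [List.append_assoc]
  have hpre : (runStack A l).2 ++ List.replicate r false <+: bpString A n :=
    h1.trans (out_prefix_bp A hln)
  have htake := take_of_prefix hpre
  rw [List.length_append, List.length_replicate] at htake
  rw [htake]
  simp [List.count_append, count_true, List.count_replicate]

lemma count_bool (S : List Bool) : S.count true + S.count false = S.length := by
  induction S with
  | nil => rfl
  | cons b t ih => cases b <;> simp [List.count_cons] <;> omega

lemma ct_mono (S : List Bool) {p q : ℕ} (h : p ≤ q) :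
    (S.take p).count true ≤ (S.take q).count true := by
  have : S.take p = (S.take q).take p := by rw [List.take_take, min_eq_left h]
  rw [this]
  exact ((S.take q).take_sublist p).count_le _

lemma ct_succ (S : List Bool) {p : ℕ} (hp : p < S.length) (ht : S.getD p false = true) :
    (S.take (p + 1)).count true = (S.take p).count true + 1 := by
  rw [List.take_succ]
  have h1 : S[p]? = some true := by
    rw [List.getElem?_eq_getElem hp]
    rw [List.getD_eq_getElem _ _ hp] at ht
    rw [ht]
  rw [h1]
  simp

lemma exists_step (A : ℕ → ℕ) : ∀ b a p, a ≤ b → (runStack A a).2.length ≤ p →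
    p < (runStack A b).2.length →
    ∃ l, a ≤ l ∧ l < b ∧ (runStack A l).2.length ≤ p ∧ p < (runStack A (l + 1)).2.length := by
  intro b
  induction b with
  | zero => intro a p _ h1 h2; simp [runStack] at h2
  | succ b ih =>
    intro a p hab h1 h2
    have hablt : a ≤ b := by
      rcases Nat.lt_or_ge a (b + 1) with h | h
      · omega
      · exfalso; have : a = b + 1 := by omega
        subst this; omega
    by_cases h : p < (runStack A b).2.length
    · obtain ⟨l, hl1, hl2, hl3, hl4⟩ := ih a p hablt h1 h
      exact ⟨l, hl1, by omega, hl3, hl4⟩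
    · exact ⟨b, hablt, Nat.lt_succ_self b, Nat.not_lt.mp h, h2⟩

lemma openPos_eq (A : ℕ → ℕ) (n : ℕ) {i : ℕ} (hi : i < n) :
    openPos (bpString A n) i = (runStack A i).2.length + kk A i := by
  apply IsLeast.csInf_eq
  constructor
  · refine ⟨?_, ?_, ?_⟩
    · have h1 := out_len_succ A i
      have h2 := out_len_le A (show i + 1 ≤ n by omega)
      have h3 := bp_len A n
      omega
    · obtain ⟨rest, hrest⟩ := out_prefix_bp A (show i + 1 ≤ n by omega)
      rw [← hrest, out_succ, List.append_assoc _ [true],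
        List.getD_append_right _ _ _ _ (by simp)]
      simp
    · exact ct_at A n hi le_rfl
  · intro p hp
    by_contra hlt
    push_neg at hlt
    have h1 := ct_succ _ hp.1 hp.2.1
    have h2 := ct_mono (bpString A n) (show p + 1 ≤ (runStack A i).2.length + kk A i by omega)
    rw [ct_at A n hi le_rfl] at h2
    rw [hp.2.2] at h1
    omega


lemma getD_replicate_false (k x : ℕ) : (List.replicate k false).getD x false = false := by
  induction k generalizing x with
  | zero => rfl
  | succ k ih =>
    cases x with
    | zero => rfl
    | succ x => simpa [List.replicate_succ] using ih x

lemma balance_iff (S : List Bool) {o c : ℕ} (ho : o ≤ c) (hc : c < S.length) :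
    (((S.take (c + 1)).drop o).count true = ((S.take (c + 1)).drop o).count false)
      ↔ 2 * ((S.take (c + 1)).count true) + o = 2 * ((S.take o).count true) + c + 1 := by
  set X := S.take (c + 1) with hX
  have hXlen : X.length = c + 1 := by rw [hX, List.length_take]; omega
  have h1 : X.take o ++ X.drop o = X := List.take_append_drop o X
  have h2 : X.take o = S.take o := by rw [hX, List.take_take, min_eq_left (by omega)]
  have hdroplen : (X.drop o).length = c + 1 - o := by rw [List.length_drop, hXlen]
  have hcnt : X.count true = (S.take o).count true + (X.drop o).count true := by
    rw [← h2, ← List.count_append, h1]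
  have hcb1 := count_bool (X.drop o)
  constructor <;> intro h <;> omega

end BPAux

open BPAux

/-- Nesting characterization: in the balanced parenthesis string produced by the
monotone-stack algorithm from a permutation `A` with `A (n-1) = 0`, the open
parenthesis written at step `j` lies strictly between the open parenthesis of
step `i` and its matching closed parenthesis iff `i < j < NSV_A[i]`.
(0-indexed; the default NSV value is `n`.) -/
theorem bpString_nesting_iff_nsv (n : ℕ) (hpos : 0 < n) (A : ℕ → ℕ)
    (hlt : ∀ i < n, A i < n)
    (hinj : ∀ i < n, ∀ j < n, A i = A j → i = j)
    (hmin : A (n - 1) = 0) :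
    ∀ i < n, ∀ j < n,
      (openPos (bpString A n) i < openPos (bpString A n) j ∧
        openPos (bpString A n) j < closePos (bpString A n) i) ↔
      (i < j ∧ j < sInf ({n} ∪ {k | i < k ∧ k < n ∧ A k < A i} : Set ℕ)) := by
  intro i hi j hj
  by_cases hij : i < j
  swap
  · apply iff_of_false
    · rintro ⟨h1, -⟩
      rw [openPos_eq A n hi, openPos_eq A n hj] at h1
      have h2 := out_len_le A (show j + 1 ≤ i + 1 by omega)
      rw [out_len_succ, out_len_succ] at h2
      omega
    · rintro ⟨h1, -⟩; exact hij h1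
  · have hin1 : i < n - 1 := by omega
    have hAi0 : A i ≠ 0 := by
      intro h
      have := hinj i hi (n - 1) (by omega) (by rw [h, hmin])
      omega
    set m := sInf ({n} ∪ {k | i < k ∧ k < n ∧ A k < A i} : Set ℕ) with hm
    have hmle : m ≤ n - 1 :=
      Nat.sInf_le (Or.inr ⟨by omega, by omega, by rw [hmin]; omega⟩)
    have hmn : m < n := by omega
    have hmM : m ∈ ({n} ∪ {k | i < k ∧ k < n ∧ A k < A i} : Set ℕ) := by
      rw [hm]; exact Nat.sInf_mem ⟨n, Or.inl rfl⟩
    have hmprop : i < m ∧ m < n ∧ A m < A i := by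
      rcases hmM with h | h
      · exact absurd (Set.mem_singleton_iff.mp h) (by omega)
      · exact h
    obtain ⟨him, -, hAm⟩ := hmprop
    have hnsv : ∀ k, i < k → k < m → A i < A k := by
      intro k hk1 hk2
      have hkn : k < n := by omega
      have hne : k ∉ ({n} ∪ {k | i < k ∧ k < n ∧ A k < A i} : Set ℕ) :=
        Nat.notMem_of_lt_sInf (hm ▸ hk2)
      have hnk : ¬ (A k < A i) := fun h => hne (Or.inr ⟨hk1, hkn, h⟩)
      rcases Nat.lt_or_ge (A i) (A k) with h | h
      · exact h
      · have : A i = A k := by omega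
        exact absurd (hinj i hi k hkn this) (by omega)
    have hsumi := len_sum A (i + 1)
    have hsumm := len_sum A m
    obtain ⟨t, hst, htgt⟩ := stack_structure A i him hnsv
    have hsle : (runStack A (i + 1)).1.length ≤ (runStack A m).1.length := by
      rw [hst]; simp
    have hstm1 : (runStack A (m + 1)).1.length ≤ (runStack A (i + 1)).1.length := by
      have hall : t.dropWhile (fun y => decide (A m < y)) = [] :=
        List.dropWhile_eq_nil_iff.mpr (fun x hx => by
          simpa using lt_trans hAm (htgt x hx))
      have h1 : (runStack A (m + 1)).1
          = A m :: ((runStack A i).1.dropWhile (fun y => decide (A i < y))).dropWhile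
              (fun y => decide (A m < y)) := by
        rw [stack_succ A m, hst, List.dropWhile_append, hall]
        simp only [List.isEmpty_nil, if_true]
        rw [stack_succ A i, List.dropWhile_cons]
        simp [hAm]
      rw [h1, stack_succ A i]
      simp only [List.length_cons]
      exact Nat.succ_le_succ (List.Sublist.length_le (List.dropWhile_sublist _))
    have hkm := st_kk A m
    set r := (runStack A m).1.length - (runStack A (i + 1)).1.length with hrdef
    set c := (runStack A m).2.length + r with hcdef
    have hrk : r + 1 ≤ kk A m := by omega
    have hS := bp_len A n
    have hint : ∀ p, (runStack A i).2.length + kk A i < p → p ≤ c →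
        p + (runStack A (i + 1)).1.length ≤ 2 * ((bpString A n).take p).count true := by
      intro p hp1 hp2
      have hp1' : (runStack A (i + 1)).2.length ≤ p := by rw [out_len_succ]; omega
      have hp2' : p < (runStack A (m + 1)).2.length := by rw [out_len_succ]; omega
      obtain ⟨l, hl1, hl2, hl3, hl4⟩ := exists_step A (m + 1) (i + 1) p (by omega) hp1' hp2'
      have hln : l < n := by omega
      have hrl : p - (runStack A l).2.length ≤ kk A l := by
        rw [out_len_succ] at hl4; omega
      have hct : ((bpString A n).take p).count true = l := by
        rw [show p = (runStack A l).2.length + (p - (runStack A l).2.length) by omega]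
        exact ct_at A n hln hrl
      rw [hct]
      have hsuml := len_sum A l
      by_cases hlm : l = m
      · subst hlm; omega
      · have hlm' : l < m := by omega
        obtain ⟨t', hst', htgt'⟩ := stack_structure A i (show i < l + 1 by omega)
          (fun k hk1 hk2 => hnsv k hk1 (by omega))
        have htne : t' ≠ [] := by
          intro h
          rw [h, List.nil_append] at hst'
          have h2 : (A l :: (runStack A l).1.dropWhile (fun y => decide (A l < y)))
              = A i :: (runStack A i).1.dropWhile (fun y => decide (A i < y)) := by
            rw [← stack_succ, ← stack_succ, hst']
          have h1 : A l = A i := by injection h2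
          have := hnsv l (by omega) hlm'
          omega
        have hlen' : (runStack A (i + 1)).1.length + 1 ≤ (runStack A (l + 1)).1.length := by
          rw [hst', List.length_append]
          have : 1 ≤ t'.length := by
            cases t' with
            | nil => exact absurd rfl htne
            | cons a b => simp
          omega
        have hkl := st_kk A l
        omega
    have ho := openPos_eq A n hi
    have hoj := openPos_eq A n hj
    have houti := out_len_succ A i
    have houtm := out_len_succ A m
    have hco : openPos (bpString A n) i < c := by
      rw [ho]
      have h2 := out_len_le A (show i + 1 ≤ m by omega)
      omega
    have hcS : c < (bpString A n).length := by
      have h2 := out_len_le A (show m + 1 ≤ n by omega)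
      omega
    have hgetD : (bpString A n).getD c false = false := by
      obtain ⟨rest, hrest⟩ := out_prefix_bp A (show m + 1 ≤ n by omega)
      rw [← hrest, out_succ,
        List.append_assoc ((runStack A m).2 ++ List.replicate (kk A m) false)]
      rw [List.getD_append _ _ _ _ (by simp; omega)]
      rw [List.getD_append_right _ _ _ _ (by omega)]
      rw [show c - (runStack A m).2.length = r by omega]
      exact getD_replicate_false _ _
    have hcti : ((bpString A n).take (openPos (bpString A n) i)).count true = i := by
      rw [ho]; exact ct_at A n hi le_rfl
    have hctc : ((bpString A n).take (c + 1)).count true = m := by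
      rw [show c + 1 = (runStack A m).2.length + (r + 1) by omega]
      exact ct_at A n hmn hrk
    have hbal : (((bpString A n).take (c + 1)).drop (openPos (bpString A n) i)).count true
        = (((bpString A n).take (c + 1)).drop (openPos (bpString A n) i)).count false := by
      rw [balance_iff (bpString A n) (le_of_lt hco) hcS, hctc, hcti, ho]
      omega
    have hclose : closePos (bpString A n) i = c := by
      apply IsLeast.csInf_eq
      refine ⟨⟨hco, hcS, hgetD, hbal⟩, ?_⟩
      intro c' hc'
      by_contra hcc
      push_neg at hcc
      obtain ⟨h1, h2, h3, h4⟩ := hc'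
      rw [balance_iff (bpString A n) (le_of_lt h1) h2, hcti, ho] at h4
      rw [ho] at h1
      have h5 := hint (c' + 1) (by omega) (by omega)
      omega
    rw [ho, hoj, hclose]
    have houtj := out_len_succ A j
    have hoij : (runStack A i).2.length + kk A i < (runStack A j).2.length + kk A j := by
      have := out_len_le A (show i + 1 ≤ j by omega)
      omega
    constructor
    · rintro ⟨-, hlt⟩
      refine ⟨hij, ?_⟩
      by_contra hmj
      push_neg at hmj
      have h4 := out_len_le A (show m + 1 ≤ j + 1 by omega)
      omega
    · rintro ⟨-, hjm⟩
      have h4 := out_len_le A (show j + 1 ≤ m by omega)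
      exact ⟨hoij, by omega⟩
end
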